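/- For every positive integer C, the ratio (1 − (1 + Σ_{q=1}^{C} Π_{r=1}^{q} λ/(r + λ))^{−1}) / (1 − (1 + Σ_{q=1}^{∞} Π_{r=1}^{q} λ/(r + λ))^{−1}) tends to C/(C+1) as the real parameter λ tends to infinity. -/

import Mathlib

open Finset Filter

lemma factor_tendsto (r : ℕ) :
    Tendsto (fun l : ℝ => l / ((r : ℝ) + l)) atTop (nhds 1) := by
  have h0 : Tendsto (fun l : ℝ => (r : ℝ) / ((r : ℝ) + l)) atTop (nhds 0) := by
    apply Tendsto.div_atTop tendsto_const_nhds
    exact tendsto_atTop_add_const_left _ _ tendsto_id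
  have h1 := (tendsto_const_nhds (x := (1:ℝ)) (f := (atTop : Filter ℝ))).sub h0
  rw [sub_zero] at h1
  refine h1.congr' ?_
  filter_upwards [eventually_gt_atTop (0:ℝ)] with l hl
  have hne : (r:ℝ) + l ≠ 0 := by positivity
  field_simp
  ring

lemma prod_tendsto (s : Finset ℕ) :
    Tendsto (fun l : ℝ => ∏ r ∈ s, l / ((r:ℝ) + l)) atTop (nhds 1) := by
  have := tendsto_finset_prod s (fun r _ => factor_tendsto r)
  simpa using this

lemma summable_prod_aux (l : ℝ) (hl : 0 < l) :
    Summable (fun q : ℕ => ∏ r ∈ Finset.Icc 1 (q + 1), l / ((r : ℝ) + l)) := by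
  have hc : l / (1 + l) < 1 := by
    rw [div_lt_one (by linarith)]; linarith
  have hc0 : (0:ℝ) ≤ l / (1 + l) := by positivity
  refine Summable.of_nonneg_of_le
    (fun q => Finset.prod_nonneg fun r _ => by positivity) (fun q => ?_)
    ((summable_geometric_of_lt_one hc0 hc).mul_left (l/(1+l)))
  calc ∏ r ∈ Finset.Icc 1 (q+1), l / ((r:ℝ)+l)
      ≤ ∏ _r ∈ Finset.Icc 1 (q+1), l/(1+l) := by
        apply Finset.prod_le_prod (fun r _ => by positivity)
        intro r hr
        have hr1 : (1:ℕ) ≤ r := (Finset.mem_Icc.mp hr).1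
        have hr1' : (1:ℝ) ≤ (r:ℝ) := by exact_mod_cast hr1
        gcongr

    _ = (l/(1+l)) * (l/(1+l))^q := by
        rw [Finset.prod_const, Nat.card_Icc]
        simp [pow_succ, mul_comm]

lemma tsum_tendsto_atTop :
    Tendsto (fun l : ℝ => ∑' q : ℕ, ∏ r ∈ Finset.Icc 1 (q+1), l/((r:ℝ)+l)) atTop atTop := by
  rw [tendsto_atTop]
  intro b
  set N := ⌈b⌉₊ + 1 with hN
  have hpart : Tendsto (fun l : ℝ => ∑ q ∈ Finset.range N, ∏ r ∈ Finset.Icc 1 (q+1), l/((r:ℝ)+l))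
      atTop (nhds (N : ℝ)) := by
    have := tendsto_finset_sum (Finset.range N) (fun q _ => prod_tendsto (Finset.Icc 1 (q+1)))
    simpa using this
  have hb : b < (N : ℝ) := by
    have := Nat.le_ceil b
    push_cast [hN]
    linarith
  filter_upwards [hpart.eventually (eventually_gt_nhds hb), eventually_gt_atTop (0:ℝ)]
    with l hl hl0
  have hsum := summable_prod_aux l hl0
  have hle := Summable.sum_le_tsum (Finset.range N)
    (fun q _ => Finset.prod_nonneg fun r _ => by positivity) hsum
  linarith

/-- Claim C.5 (computational content): the ratio of the capacity-`C`
availability probability to the unbounded-capacity one (birth rate `λ`,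
death rates `r + λ`) tends to `C/(C+1)` as `λ → ∞`; both series converge
for every `λ > 0`. -/
theorem stmt_12 (C : ℕ) (hC : 0 < C) :
    (∀ l : ℝ, 0 < l →
      Summable (fun q : ℕ => ∏ r ∈ Finset.Icc 1 (q + 1), l / ((r : ℝ) + l))) ∧
    Filter.Tendsto
      (fun l : ℝ =>
        (1 - (1 + ∑ q ∈ Finset.Icc 1 C, ∏ r ∈ Finset.Icc 1 q, l / ((r : ℝ) + l))⁻¹) /
        (1 - (1 + ∑' q : ℕ, ∏ r ∈ Finset.Icc 1 (q + 1), l / ((r : ℝ) + l))⁻¹))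
      Filter.atTop (nhds ((C : ℝ) / ((C : ℝ) + 1))) := by
  refine ⟨fun l hl => summable_prod_aux l hl, ?_⟩
  have hs : Tendsto (fun l : ℝ => ∑ q ∈ Finset.Icc 1 C, ∏ r ∈ Finset.Icc 1 q, l/((r:ℝ)+l))
      atTop (nhds (C : ℝ)) := by
    have := tendsto_finset_sum (Finset.Icc 1 C) (fun q _ => prod_tendsto (Finset.Icc 1 q))
    simpa [Nat.card_Icc] using this
  have hne : (1 + (C:ℝ)) ≠ 0 := by positivity
  have hnum : Tendsto
      (fun l : ℝ => 1 - (1 + ∑ q ∈ Finset.Icc 1 C, ∏ r ∈ Finset.Icc 1 q, l/((r:ℝ)+l))⁻¹)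
      atTop (nhds (1 - (1 + (C:ℝ))⁻¹)) :=
    tendsto_const_nhds.sub ((tendsto_const_nhds.add hs).inv₀ hne)
  have hden : Tendsto
      (fun l : ℝ => 1 - (1 + ∑' q : ℕ, ∏ r ∈ Finset.Icc 1 (q+1), l/((r:ℝ)+l))⁻¹)
      atTop (nhds 1) := by
    have h2 := (tendsto_atTop_add_const_left atTop (1:ℝ) tsum_tendsto_atTop).inv_tendsto_atTop
    have := tendsto_const_nhds (x := (1:ℝ)) (f := (atTop : Filter ℝ)) |>.sub h2
    simpa using this
  have hdiv := hnum.div hden one_ne_zero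
  rw [div_one] at hdiv
  have heq : (C:ℝ)/((C:ℝ)+1) = 1 - (1 + (C:ℝ))⁻¹ := by
    rw [eq_sub_iff_add_eq, inv_eq_one_div,
      div_add_div _ _ (by positivity) hne, div_eq_one_iff_eq (by positivity)]
    ring
  rw [heq]
  exact hdiv
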